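/- For every real α with α > √(ln 2), there exists a natural number N such that for all n ≥ N, (1/2 − α/√n − 1/n)^(n/2 − α√n) · (1/2 + α/√n + 1/n)^(n/2 + α√n) ≥ 2^(−(n−2)). -/

import Mathlib

open Filter Real Topology

private lemma log1p_tendsto :
    Tendsto (fun u : ℝ => Real.log (1 + u) / u) (𝓝[≠] (0:ℝ)) (𝓝 1) := by
  have h := Real.hasDerivAt_log one_ne_zero
  rw [hasDerivAt_iff_tendsto_slope] at h
  have hmap : Tendsto (fun u : ℝ => 1 + u) (𝓝[≠] (0:ℝ)) (𝓝[≠] (1:ℝ)) := by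
    rw [tendsto_nhdsWithin_iff]
    constructor
    · simpa using ((tendsto_const_nhds.add (tendsto_id (α := ℝ))).mono_left
        nhdsWithin_le_nhds : Tendsto (fun u : ℝ => 1 + u) (𝓝[≠] (0:ℝ)) (𝓝 (1+0)))
    · filter_upwards [self_mem_nhdsWithin] with u hu
      simp only [Set.mem_compl_iff, Set.mem_singleton_iff] at hu ⊢
      intro h'; exact hu (by linarith)
  have h2 := h.comp hmap
  simp only [inv_one] at h2
  refine h2.congr fun u => ?_
  simp [Function.comp, slope_def_field, Real.log_one]

private lemma aux1 (x T : ℝ) (hT : T ≠ 0) :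
    (x/2) * Real.log (1 - T^2) =
      (-(1/2)) * ((x * T^2) * (Real.log (1 + -(T^2)) / (-(T^2)))) := by
  rw [show (1:ℝ) + -(T^2) = 1 - T^2 by ring]
  have h2 : T^2 ≠ 0 := pow_ne_zero _ hT
  field_simp

private lemma aux2 (a s T : ℝ) (hT : T ≠ 0) :
    a * s * (Real.log (1+T) - Real.log (1-T)) =
      a * ((s*T) * (Real.log (1+T)/T)) + a * ((s*T) * (Real.log (1 + -T)/(-T))) := by
  rw [show (1:ℝ) + -T = 1 - T by ring, div_neg]
  field_simp
  ring

private lemma log1p_seq {c : ℕ → ℝ} (h0 : Tendsto c atTop (𝓝 0))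
    (hne : ∀ᶠ n in atTop, c n ≠ 0) :
    Tendsto (fun n => Real.log (1 + c n) / c n) atTop (𝓝 1) :=
  log1p_tendsto.comp (tendsto_nhdsWithin_iff.mpr ⟨h0, hne⟩)

/-- For `α > √(ln 2)`, eventually
`(1/2 - α/√n - 1/n)^(n/2 - α√n) · (1/2 + α/√n + 1/n)^(n/2 + α√n) ≥ 2^(-(n-2))`. -/
theorem interval_length_ge_two_pow (α : ℝ) (hα : Real.sqrt (Real.log 2) < α) :
    ∃ N : ℕ, ∀ n : ℕ, N ≤ n →
      (2 : ℝ) ^ (-((n : ℝ) - 2)) ≤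
        (1 / 2 - α / Real.sqrt n - 1 / n) ^ ((n : ℝ) / 2 - α * Real.sqrt n) *
          (1 / 2 + α / Real.sqrt n + 1 / n) ^ ((n : ℝ) / 2 + α * Real.sqrt n) := by
  have hα0 : 0 < α := lt_of_le_of_lt (Real.sqrt_nonneg _) hα
  have hα2 : Real.log 2 < α ^ 2 := by
    nlinarith [Real.sq_sqrt (Real.log_nonneg one_le_two), Real.sqrt_nonneg (Real.log 2)]
  set t : ℕ → ℝ := fun n => 2 * α / Real.sqrt n + 2 / n with ht
  -- √n → ∞
  have hs : Tendsto (fun n : ℕ => Real.sqrt n) atTop atTop := by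
    have := (tendsto_rpow_atTop (by norm_num : (0:ℝ) < 1/2)).comp
      tendsto_natCast_atTop_atTop
    exact this.congr fun n => (Real.sqrt_eq_rpow _).symm
  have hnR : Tendsto (fun n : ℕ => (n : ℝ)) atTop atTop := tendsto_natCast_atTop_atTop
  -- t → 0
  have ht0 : Tendsto t atTop (𝓝 0) := by
    have h1 : Tendsto (fun n : ℕ => 2 * α / Real.sqrt n) atTop (𝓝 0) := by
      simpa [div_eq_mul_inv] using (hs.inv_tendsto_atTop).const_mul (2*α)
    have h2 : Tendsto (fun n : ℕ => 2 / (n:ℝ)) atTop (𝓝 0) := by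
      simpa [div_eq_mul_inv] using (hnR.inv_tendsto_atTop).const_mul (2:ℝ)
    simpa using h1.add h2
  -- eventually facts about t
  have htpos : ∀ n : ℕ, 1 ≤ n → 0 < t n := by
    intro n hn
    have hn0 : (0:ℝ) < n := by exact_mod_cast hn
    have hsq : 0 < Real.sqrt n := Real.sqrt_pos.mpr hn0
    have := div_pos (by linarith : (0:ℝ) < 2*α) hsq
    have := div_pos (by norm_num : (0:ℝ) < 2) hn0
    simp only [ht]; positivity
  have htne : ∀ᶠ n : ℕ in atTop, t n ≠ 0 := by
    filter_upwards [eventually_ge_atTop 1] with n hn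
    exact (htpos n hn).ne'
  -- √n * t n → 2α
  have hst : Tendsto (fun n : ℕ => Real.sqrt n * t n) atTop (𝓝 (2*α)) := by
    have hlim : Tendsto (fun n : ℕ => 2*α + 2 / Real.sqrt n) atTop (𝓝 (2*α + 0)) :=
      tendsto_const_nhds.add (by simpa [div_eq_mul_inv] using
        (hs.inv_tendsto_atTop).const_mul (2:ℝ))
    rw [show (2*α : ℝ) = 2*α + 0 by ring]
    refine Tendsto.congr' ?_ hlim
    filter_upwards [eventually_ge_atTop 1] with n hn
    have hn0 : (0:ℝ) < n := by exact_mod_cast hn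
    have hsq : 0 < Real.sqrt n := Real.sqrt_pos.mpr hn0
    have hss : Real.sqrt n * Real.sqrt n = (n:ℝ) := Real.mul_self_sqrt n.cast_nonneg
    simp only [ht]
    field_simp
    nlinarith [hss]
  -- n * t n ^ 2 → 4 α²
  have hnt2 : Tendsto (fun n : ℕ => (n:ℝ) * t n ^ 2) atTop (𝓝 (4*α^2)) := by
    have := hst.mul hst
    rw [show (2*α) * (2*α) = 4*α^2 by ring] at this
    refine this.congr fun n => ?_
    have hss : Real.sqrt n * Real.sqrt n = (n:ℝ) := Real.mul_self_sqrt n.cast_nonneg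
    nlinarith [hss]
  -- the main function F
  set F : ℕ → ℝ := fun n => ((n:ℝ)/2) * Real.log (1 - t n ^ 2)
      + α * Real.sqrt n * (Real.log (1 + t n) - Real.log (1 - t n)) with hF
  have hF1 : Tendsto (fun n : ℕ => ((n:ℝ)/2) * Real.log (1 - t n ^ 2)) atTop
      (𝓝 (-(2*α^2))) := by
    have hc1 : Tendsto (fun n : ℕ => -(t n ^ 2)) atTop (𝓝 0) := by
      simpa using ((ht0.mul ht0).neg).congr fun n => by ring
    have hne1 : ∀ᶠ n : ℕ in atTop, -(t n ^ 2) ≠ 0 := by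
      filter_upwards [htne] with n hn
      simpa [pow_eq_zero_iff] using hn
    have hlog1 := log1p_seq hc1 hne1
    have hlim := (hnt2.mul hlog1).const_mul (-(1/2) : ℝ)
    rw [show (-(1/2) : ℝ) * (4*α^2 * 1) = -(2*α^2) by ring] at hlim
    refine Tendsto.congr' ?_ hlim
    filter_upwards [htne] with n hn
    exact (aux1 (n:ℝ) (t n) hn).symm
  have hF2 : Tendsto (fun n : ℕ => α * Real.sqrt n *
      (Real.log (1 + t n) - Real.log (1 - t n))) atTop (𝓝 (4*α^2)) := by
    have hlog2 := log1p_seq ht0 htne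
    have hne3 : ∀ᶠ n : ℕ in atTop, -(t n) ≠ 0 := by
      filter_upwards [htne] with n hn; simpa using hn
    have hlog3 := log1p_seq (by simpa using ht0.neg :
      Tendsto (fun n : ℕ => -(t n)) atTop (𝓝 0)) hne3
    have hlim : Tendsto (fun n : ℕ =>
        α * ((Real.sqrt n * t n) * (Real.log (1 + t n) / t n))
        + α * ((Real.sqrt n * t n) * (Real.log (1 + -(t n)) / (-(t n))))) atTop
        (𝓝 (α * ((2*α) * 1) + α * ((2*α) * 1))) :=
      (((hst.mul hlog2).const_mul α).add ((hst.mul hlog3).const_mul α))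
    rw [show α * ((2*α) * 1) + α * ((2*α) * 1) = 4*α^2 by ring] at hlim
    refine Tendsto.congr' ?_ hlim
    filter_upwards [htne] with n hn
    exact (aux2 α (Real.sqrt n) (t n) hn).symm
  have hFlim : Tendsto F atTop (𝓝 (2*α^2)) := by
    have := hF1.add hF2
    rw [show -(2*α^2) + 4*α^2 = 2*α^2 by ring] at this
    exact this
  have hFev : ∀ᶠ n : ℕ in atTop, 2 * Real.log 2 < F n :=
    hFlim.eventually (eventually_gt_nhds (by nlinarith))
  have htlt : ∀ᶠ n : ℕ in atTop, t n < 1/2 :=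
    ht0.eventually (eventually_lt_nhds (by norm_num))
  -- combine
  obtain ⟨N, hN⟩ := eventually_atTop.mp ((eventually_ge_atTop 1).and (htlt.and hFev))
  refine ⟨N, fun n hn => ?_⟩
  obtain ⟨hn1, hlt, hFn⟩ := hN n hn
  have hn0 : (0:ℝ) < n := by exact_mod_cast hn1
  have hsq : 0 < Real.sqrt n := Real.sqrt_pos.mpr hn0
  have hT0 : 0 < t n := htpos n hn1
  have eA0 : 1/2 - α / Real.sqrt n - 1/(n:ℝ) = (1 - t n)/2 := by
    simp only [ht]; ring
  have eB0 : 1/2 + α / Real.sqrt n + 1/(n:ℝ) = (1 + t n)/2 := by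
    simp only [ht]; ring
  have hFn0 : 2 * Real.log 2 < ((n:ℝ)/2) * Real.log (1 - t n ^ 2)
      + α * Real.sqrt n * (Real.log (1 + t n) - Real.log (1 - t n)) := hFn
  obtain ⟨T, hTeq⟩ : ∃ T, t n = T := ⟨t n, rfl⟩
  rw [hTeq] at hT0 hlt eA0 eB0 hFn0
  have hA : (0:ℝ) < 1 - T := by linarith
  have hB : (0:ℝ) < 1 + T := by linarith
  have hApos : (0:ℝ) < (1 - T)/2 := by linarith
  have hBpos : (0:ℝ) < (1 + T)/2 := by linarith
  rw [eA0, eB0, Real.rpow_def_of_pos (by norm_num : (0:ℝ) < 2),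
    Real.rpow_def_of_pos hApos, Real.rpow_def_of_pos hBpos, ← Real.exp_add,
    Real.exp_le_exp]
  have hlA : Real.log ((1 - T)/2) = Real.log (1 - T) - Real.log 2 :=
    Real.log_div hA.ne' two_ne_zero
  have hlB : Real.log ((1 + T)/2) = Real.log (1 + T) - Real.log 2 :=
    Real.log_div hB.ne' two_ne_zero
  have hfac : Real.log (1 - T^2) = Real.log (1 - T) + Real.log (1 + T) := by
    rw [show (1:ℝ) - T^2 = (1-T)*(1+T) by ring, Real.log_mul hA.ne' hB.ne']
  have hFn' : 2 * Real.log 2 < ((n:ℝ)/2) * (Real.log (1 - T) + Real.log (1 + T))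
      + α * Real.sqrt n * (Real.log (1 + T) - Real.log (1 - T)) := by
    rw [← hfac]; exact hFn0
  rw [hlA, hlB]
  nlinarith [hFn']
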